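/- Fix an integer k ≥ 1, and let (p_n) be a sequence in (0,1] with 1 − p_n = O(ln(n)/n) (i.e., there is a constant C with 1 − p_n ≤ C·ln(n)/n for all sufficiently large n). For each n let μ_n = μ_{n,p_n} be the Erdős–Rényi measure. Then lim_{n→∞} E_{μ_n}[β_{k,k}(G_ω)] / (n^{k+1}·p_n^{2k−1}) = 1, where β_{k,k}(G) is the rank of EMH_{k,k}(G). -/

import Mathlib

open scoped Classical

variable {V : Type*}

/-- Length of the walk described by a list of landmarks: sum of path-metric
distances between consecutive entries (`⊤`-valued if some pair is unreachable). -/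
noncomputable def mlen (G : SimpleGraph V) : List V → ℕ∞
  | [] => 0
  | [_] => 0
  | a :: b :: t => G.edist a b + mlen G (b :: t)

/-- A list of landmarks is a trail if consecutive entries are distinct and reachable. -/
def IsTrailList (G : SimpleGraph V) (l : List V) : Prop :=
  l.Chain' fun a b => a ≠ b ∧ G.Reachable a b

/-- `trails G k ℓ` is the set `T_{k,ℓ}(G)` of `k`-trails of length `ℓ`,
encoded as lists with `k+1` entries. -/
def trails (G : SimpleGraph V) (k ℓ : ℕ) : Set (List V) :=
  {l | l.length = k + 1 ∧ IsTrailList G l ∧ mlen G l = (ℓ : ℕ∞)}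

/-- `etrails G k ℓ` is the set `ET_{k,ℓ}(G)` of eulerian `k`-trails of length `ℓ`. -/
def etrails (G : SimpleGraph V) (k ℓ : ℕ) : Set (List V) :=
  {l | l ∈ trails G k ℓ ∧ l.Nodup}

/-- Boundary of a single generator: `∂_{·,ℓ}(x₀,…,x_k) = Σ_{i=1}^{k-1} (-1)^i ∂^i`,
where `∂^i` deletes the `i`-th landmark if this does not change the length. -/
noncomputable def bdryElt (G : SimpleGraph V) (ℓ : ℕ) (l : List V) : List V →₀ ℤ :=
  ∑ i ∈ Finset.Ioo 0 (l.length - 1),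
    if mlen G (l.eraseIdx i) = (ℓ : ℕ∞) then ((-1 : ℤ) ^ i) • Finsupp.single (l.eraseIdx i) 1
    else 0

/-- The magnitude differential (length parameter `ℓ`) on the ambient free abelian group
on all landmark lists.  Its restriction to `MC_{k,ℓ}(G)` (chains supported on
`trails G k ℓ`) is `∂_{k,ℓ}`. -/
noncomputable def bdry (G : SimpleGraph V) (ℓ : ℕ) : (List V →₀ ℤ) →ₗ[ℤ] (List V →₀ ℤ) :=
  Finsupp.lsum ℤ fun l => LinearMap.toSpanSingleton ℤ _ (bdryElt G ℓ l)

/-- `MC_{k,ℓ}(G)`: the free abelian group on `T_{k,ℓ}(G)`, realized as the submodule of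
finitely supported `ℤ`-valued functions supported on trails. -/
noncomputable def MC (G : SimpleGraph V) (k ℓ : ℕ) : Submodule ℤ (List V →₀ ℤ) :=
  Finsupp.supported ℤ ℤ (trails G k ℓ)

/-- `EMC_{k,ℓ}(G)`: the free abelian group on `ET_{k,ℓ}(G)`. -/
noncomputable def EMC (G : SimpleGraph V) (k ℓ : ℕ) : Submodule ℤ (List V →₀ ℤ) :=
  Finsupp.supported ℤ ℤ (etrails G k ℓ)

/-- `EMH_{k,k}(G) = ker(∂_{k,k}|_{EMC_{k,k}(G)})`, the first-diagonal eulerian magnitude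
homology group (`EMC_{k+1,k}(G) = 0`, so homology is just the kernel). -/
noncomputable def EMHkk (G : SimpleGraph V) (k : ℕ) : Submodule ℤ (List V →₀ ℤ) :=
  EMC G k k ⊓ LinearMap.ker (bdry G k)

/-- `MH_{k,k}(G) = ker(∂_{k,k}|_{MC_{k,k}(G)})`. -/
noncomputable def MHkk (G : SimpleGraph V) (k : ℕ) : Submodule ℤ (List V →₀ ℤ) :=
  MC G k k ⊓ LinearMap.ker (bdry G k)

/-- `β_{k,k}(G)`, the rank of `EMH_{k,k}(G)`. -/
noncomputable def emBetti (G : SimpleGraph V) (k : ℕ) : ℕ :=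
  Module.finrank ℤ (EMHkk G k)

/-- `c(G,H)`: the number of vertex subsets of `G` whose induced subgraph is isomorphic
to `H`. -/
noncomputable def subgraphCount (G : SimpleGraph V) {W : Type*} (H : SimpleGraph W) : ℕ :=
  Set.ncard {s : Set V | Nonempty ((G.induce s) ≃g H)}

open MeasureTheory
open scoped ENNReal

/-- The Erdős–Rényi measure `μ_{n,p}` on `Ω_n`, the space of `{0,1}`-labellings of the
(unordered) pairs of vertices of `{1,…,n}`: each coordinate is an independent
Bernoulli(`p`) variable. -/
noncomputable def erMeasure (n : ℕ) (p : ℝ≥0∞) (hp : p ≤ 1) :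
    Measure (Sym2 (Fin n) → Bool) :=
  Measure.pi fun _ => (PMF.ofFintype (fun b => cond b p (1 - p)) (by simp [hp])).toMeasure

/-- The simple graph `G_ω` determined by `ω ∈ Ω_n`: distinct `u, v` are adjacent iff
`ω({u,v}) = 1`. -/
def erGraph {n : ℕ} (ω : Sym2 (Fin n) → Bool) : SimpleGraph (Fin n) :=
  SimpleGraph.fromRel fun u v => ω s(u, v) = true

namespace ErProof
open SimpleGraph List

variable {V : Type*} {G : SimpleGraph V}

lemma mlen_chain : ∀ l : List V, l.Chain' G.Adj → mlen G l = ((l.length - 1 : ℕ) : ℕ∞)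
  | [], _ => by simp [mlen]
  | [a], _ => by simp [mlen]
  | a :: b :: t, h => by
    simp only [List.Chain', List.isChain_cons_cons] at h
    rw [mlen, mlen_chain (b :: t) h.2, SimpleGraph.edist_eq_one_iff_adj.mpr h.1]
    simp only [List.length_cons, Nat.add_sub_cancel]
    rw [← Nat.cast_one, ← Nat.cast_add, Nat.add_comm]

lemma le_mlen : ∀ l : List V, IsTrailList G l → ((l.length - 1 : ℕ) : ℕ∞) ≤ mlen G l
  | [], _ => by simp [mlen]
  | [a], _ => by simp [mlen]
  | a :: b :: t, h => by
    simp only [IsTrailList, List.Chain', List.isChain_cons_cons] at h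
    have h1 : 1 ≤ G.edist a b := Order.one_le_iff_pos.mpr (edist_pos_of_ne h.1.1)
    have h2 := le_mlen (b :: t) h.2
    simp only [List.length_cons, Nat.add_sub_cancel] at h2 ⊢
    rw [mlen]
    calc ((t.length + 1 : ℕ) : ℕ∞) = 1 + (t.length : ℕ∞) := by push_cast; ring
    _ ≤ G.edist a b + mlen G (b :: t) := add_le_add h1 h2

lemma chain_of_mlen : ∀ l : List V, IsTrailList G l →
    mlen G l = ((l.length - 1 : ℕ) : ℕ∞) → l.Chain' G.Adj
  | [], _, _ => List.isChain_nil
  | [a], _, _ => List.isChain_singleton a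
  | a :: b :: t, h, hm => by
    simp only [IsTrailList, List.Chain', List.isChain_cons_cons] at h
    have hne : G.edist a b ≠ ⊤ := edist_ne_top_iff_reachable.mpr h.1.2
    rw [mlen] at hm
    have hmt : mlen G (b :: t) ≠ ⊤ := by
      intro hh
      rw [hh, add_top] at hm
      exact (ENat.coe_ne_top _) hm.symm
    have h1 : 1 ≤ G.edist a b := Order.one_le_iff_pos.mpr (edist_pos_of_ne h.1.1)
    have h2 := le_mlen (b :: t) h.2
    lift G.edist a b to ℕ using hne with d hd
    lift mlen G (b :: t) to ℕ using hmt with r hr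
    simp only [List.length_cons, Nat.add_sub_cancel] at hm h2 ⊢
    have hdr : d + r = t.length + 1 := by exact_mod_cast hm
    have h1' : 1 ≤ d := by exact_mod_cast h1
    have h2' : t.length ≤ r := by exact_mod_cast h2
    have hd1 : d = 1 := by omega
    have hr1 : r = t.length := by omega
    refine List.isChain_cons_cons.mpr ⟨SimpleGraph.edist_eq_one_iff_adj.mp (by rw [← hd, hd1]; simp), ?_⟩
    exact chain_of_mlen (b :: t) h.2 (by rw [← hr, hr1]; simp)

lemma etrails_kk (G : SimpleGraph V) (k : ℕ) :
    etrails G k k = {l | l.length = k + 1 ∧ l.Chain' G.Adj ∧ l.Nodup} := by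
  ext l
  simp only [etrails, trails, Set.mem_setOf_eq]
  constructor
  · rintro ⟨⟨hlen, ht, hm⟩, hnd⟩
    exact ⟨hlen, chain_of_mlen l ht (by rw [hm, hlen]; simp), hnd⟩
  · rintro ⟨hlen, hc, hnd⟩
    refine ⟨⟨hlen, ?_, ?_⟩, hnd⟩
    · exact hc.imp fun a b hab => ⟨hab.ne, hab.reachable⟩
    · rw [mlen_chain l hc, hlen]; simp

end ErProof

namespace ErProof
open SimpleGraph List

variable {V : Type*} {G : SimpleGraph V}

lemma single_mem_EMHkk {k : ℕ} (hk : 1 ≤ k) (G : SimpleGraph V) (f : Fin (k+1) → V)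
    (hinj : Function.Injective f)
    (hc : ∀ (i : ℕ) (hi : i + 1 < k + 1), G.Adj (f ⟨i, by omega⟩) (f ⟨i+1, hi⟩))
    (hch : ∀ (i : ℕ) (hi : i + 2 < k + 1), G.Adj (f ⟨i, by omega⟩) (f ⟨i+2, hi⟩)) :
    Finsupp.single (List.ofFn f) 1 ∈ EMHkk G k := by
  have hlen : (List.ofFn f).length = k + 1 := List.length_ofFn (f := f)
  have hchain : (List.ofFn f).Chain' G.Adj := List.isChain_ofFn.mpr hc
  have hmem : List.ofFn f ∈ etrails G k k := by
    rw [etrails_kk]; exact ⟨hlen, hchain, List.nodup_ofFn.mpr hinj⟩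
  refine ⟨Finsupp.single_mem_supported ℤ 1 hmem, ?_⟩
  show bdry G k (Finsupp.single (List.ofFn f) 1) = 0
  rw [bdry, Finsupp.lsum_single, LinearMap.toSpanSingleton_apply, one_smul]
  rw [bdryElt]
  refine Finset.sum_eq_zero fun i hi => ?_
  rw [hlen] at hi
  simp only [Finset.mem_Ioo, Nat.add_sub_cancel] at hi
  rw [if_neg]
  have hil : i < (List.ofFn f).length := by omega
  have hlen' : ((List.ofFn f).eraseIdx i).length = k := by
    rw [List.length_eraseIdx_of_lt hil, hlen]
    omega
  have hchain' : ((List.ofFn f).eraseIdx i).Chain' G.Adj := by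
    refine List.isChain_iff_getElem.mpr ?_
    intro j hj
    rw [hlen'] at hj
    by_cases h1 : j < i
    · rw [List.getElem_eraseIdx_of_lt _ h1]
      by_cases h2 : j + 1 < i
      · rw [List.getElem_eraseIdx_of_lt _ h2]
        simp only [List.getElem_ofFn]
        exact hc j (by omega)
      · rw [List.getElem_eraseIdx_of_ge _ (by omega)]
        simp only [List.getElem_ofFn]
        exact hch j (by omega)
    · rw [List.getElem_eraseIdx_of_ge _ (by omega),
        List.getElem_eraseIdx_of_ge _ (by omega)]
      simp only [List.getElem_ofFn]
      exact hc (j+1) (by omega)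
  rw [mlen_chain _ hchain', hlen']
  intro hcon
  have : k - 1 = k := by exact_mod_cast hcon
  omega

lemma emBetti_le_ncard {V : Type} (G : SimpleGraph V) (k : ℕ) (hfin : (etrails G k k).Finite) :
    emBetti G k ≤ Nat.card (etrails G k k) := by
  have h1 : Module.rank ℤ (EMHkk G k) ≤ Module.rank ℤ (EMC G k k) :=
    Submodule.rank_mono inf_le_left
  have h2 : Module.rank ℤ (EMC G k k) = Cardinal.mk (etrails G k k) :=
    (Finsupp.supportedEquivFinsupp (R := ℤ) (M := ℤ) (etrails G k k)).rank_eq.trans (rank_finsupp_self' ℤ)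
  rw [emBetti, Module.finrank, Nat.card]
  exact Cardinal.toNat_le_toNat (h2 ▸ h1) (h2 ▸ hfin.lt_aleph0)

lemma ncard_le_emBetti {V : Type} (G : SimpleGraph V) (k : ℕ) (hfin : (etrails G k k).Finite)
    (S : Set (List V)) (hS : Finsupp.supported ℤ ℤ S ≤ EMHkk G k) :
    Nat.card S ≤ emBetti G k := by
  have h1 : Module.rank ℤ (Finsupp.supported ℤ ℤ S) ≤ Module.rank ℤ (EMHkk G k) :=
    Submodule.rank_mono hS
  have h2 : Module.rank ℤ (Finsupp.supported ℤ ℤ S) = Cardinal.mk S :=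
    (Finsupp.supportedEquivFinsupp (R := ℤ) (M := ℤ) S).rank_eq.trans (rank_finsupp_self' ℤ)
  have h3 : Module.rank ℤ (EMHkk G k) < Cardinal.aleph0 := by
    refine lt_of_le_of_lt (Submodule.rank_mono (inf_le_left : EMHkk G k ≤ EMC G k k)) ?_
    have h4 : Module.rank ℤ (EMC G k k) = Cardinal.mk (etrails G k k) :=
      (Finsupp.supportedEquivFinsupp (R := ℤ) (M := ℤ) (etrails G k k)).rank_eq.trans (rank_finsupp_self' ℤ)
    rw [h4]
    exact hfin.lt_aleph0
  rw [emBetti, Module.finrank, Nat.card]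
  exact Cardinal.toNat_le_toNat (h2 ▸ h1) h3

end ErProof

namespace ErProof
open SimpleGraph List Finset

variable {n k : ℕ}

/-- pairs of consecutive landmarks -/
noncomputable def chainPairs (n k : ℕ) (f : Fin (k+1) ↪ Fin n) : Finset (Sym2 (Fin n)) :=
  Finset.univ.image fun i : Fin k =>
    s(f ⟨i.1, by have := i.2; omega⟩, f ⟨i.1 + 1, by have := i.2; omega⟩)

noncomputable def chordPairs (n k : ℕ) (f : Fin (k+1) ↪ Fin n) : Finset (Sym2 (Fin n)) :=
  Finset.univ.image fun i : Fin (k-1) =>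
    s(f ⟨i.1, by have := i.2; omega⟩, f ⟨i.1 + 2, by have := i.2; omega⟩)

noncomputable def goodPairs (n k : ℕ) (f : Fin (k+1) ↪ Fin n) : Finset (Sym2 (Fin n)) :=
  chainPairs n k f ∪ chordPairs n k f

lemma card_chainPairs (f : Fin (k+1) ↪ Fin n) : (chainPairs n k f).card = k := by
  rw [chainPairs, Finset.card_image_of_injective _ ?_, Finset.card_univ, Fintype.card_fin]
  intro a b hab
  rw [Sym2.eq_iff] at hab
  rcases hab with ⟨h1, h2⟩ | ⟨h1, h2⟩ <;>
    · have e1 := f.injective h1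
      have e2 := f.injective h2
      rw [Fin.mk.injEq] at e1 e2
      exact Fin.ext (by omega)

lemma card_goodPairs (hk : 1 ≤ k) (f : Fin (k+1) ↪ Fin n) :
    (goodPairs n k f).card = 2 * k - 1 := by
  rw [goodPairs, Finset.card_union_of_disjoint, card_chainPairs]
  · have : (chordPairs n k f).card = k - 1 := by
      rw [chordPairs, Finset.card_image_of_injective _ ?_, Finset.card_univ, Fintype.card_fin]
      intro a b hab
      rw [Sym2.eq_iff] at hab
      rcases hab with ⟨h1, h2⟩ | ⟨h1, h2⟩ <;>
        · have e1 := f.injective h1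
          have e2 := f.injective h2
          rw [Fin.mk.injEq] at e1 e2
          exact Fin.ext (by omega)
    rw [this]; omega
  · rw [Finset.disjoint_left]
    rintro e he1 he2
    rw [chainPairs, Finset.mem_image] at he1
    rw [chordPairs, Finset.mem_image] at he2
    obtain ⟨a, -, ha⟩ := he1
    obtain ⟨b, -, hb⟩ := he2
    rw [← hb, Sym2.eq_iff] at ha
    rcases ha with ⟨h1, h2⟩ | ⟨h1, h2⟩ <;>
      · have e1 := f.injective h1
        have e2 := f.injective h2
        rw [Fin.mk.injEq] at e1 e2
        omega

lemma adj_erGraph {ω : Sym2 (Fin n) → Bool} {u v : Fin n} (huv : u ≠ v) :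
    (erGraph ω).Adj u v ↔ ω s(u, v) = true := by
  rw [erGraph, SimpleGraph.fromRel_adj]
  constructor
  · rintro ⟨-, h | h⟩
    · exact h
    · rwa [Sym2.eq_swap]
  · intro h; exact ⟨huv, Or.inl h⟩

lemma etrails_finite (G : SimpleGraph (Fin n)) (k : ℕ) : (etrails G k k).Finite :=
  (List.finite_length_eq (Fin n) (k+1)).subset fun l hl => by
    rw [etrails_kk] at hl; exact hl.1

lemma card_good_le_emBetti (hk : 1 ≤ k) (ω : Sym2 (Fin n) → Bool) :
    (Finset.univ.filter fun f : Fin (k+1) ↪ Fin n =>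
        ∀ e ∈ goodPairs n k f, ω e = true).card ≤ emBetti (erGraph ω) k := by
  classical
  set P : (Fin (k+1) ↪ Fin n) → Prop := fun f => ∀ e ∈ goodPairs n k f, ω e = true with hP
  have hinj : Function.Injective (fun f : Fin (k+1) ↪ Fin n => List.ofFn ⇑f) :=
    fun f g h => DFunLike.coe_injective (List.ofFn_injective h)
  have hcard : Nat.card ((fun f : Fin (k+1) ↪ Fin n => List.ofFn ⇑f) '' {f | P f}) =
      (Finset.univ.filter P).card := by
    rw [Nat.card_image_of_injective hinj, Nat.card_eq_fintype_card]
    exact Fintype.card_subtype _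
  rw [← hcard]
  apply ncard_le_emBetti _ _ (etrails_finite _ _)
  rw [Finsupp.supported_eq_span_single, Submodule.span_le]
  rintro x ⟨l, ⟨f, hf, rfl⟩, rfl⟩
  refine single_mem_EMHkk hk (erGraph ω) ⇑f f.injective ?_ ?_
  · intro i hi
    have hne : f ⟨i, by omega⟩ ≠ f ⟨i+1, hi⟩ := fun h => by
      have := f.injective h; rw [Fin.mk.injEq] at this; omega
    rw [adj_erGraph hne]
    refine hf _ (Finset.mem_union_left _ ?_)
    rw [chainPairs, Finset.mem_image]
    exact ⟨⟨i, by omega⟩, Finset.mem_univ _, rfl⟩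
  · intro i hi
    have hne : f ⟨i, by omega⟩ ≠ f ⟨i+2, hi⟩ := fun h => by
      have := f.injective h; rw [Fin.mk.injEq] at this; omega
    rw [adj_erGraph hne]
    refine hf _ (Finset.mem_union_right _ ?_)
    rw [chordPairs, Finset.mem_image]
    exact ⟨⟨i, by omega⟩, Finset.mem_univ _, rfl⟩

lemma emBetti_le_card_chain (ω : Sym2 (Fin n) → Bool) :
    emBetti (erGraph ω) k ≤ (Finset.univ.filter fun f : Fin (k+1) ↪ Fin n =>
        ∀ e ∈ chainPairs n k f, ω e = true).card := by
  classical
  set Q : (Fin (k+1) ↪ Fin n) → Prop := fun f => ∀ e ∈ chainPairs n k f, ω e = true with hQ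
  have hinj : Function.Injective (fun f : Fin (k+1) ↪ Fin n => List.ofFn ⇑f) :=
    fun f g h => DFunLike.coe_injective (List.ofFn_injective h)
  have hcard : Nat.card ((fun f : Fin (k+1) ↪ Fin n => List.ofFn ⇑f) '' {f | Q f}) =
      (Finset.univ.filter Q).card := by
    rw [Nat.card_image_of_injective hinj, Nat.card_eq_fintype_card]
    exact Fintype.card_subtype _
  refine le_trans (emBetti_le_ncard _ _ (etrails_finite _ _)) ?_
  rw [← hcard, Nat.card_coe_set_eq, Nat.card_coe_set_eq]
  refine Set.ncard_le_ncard ?_ ?_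
  · -- etrails ⊆ image
    intro l hl
    rw [etrails_kk] at hl
    obtain ⟨hlen, hchain, hnd⟩ := hl
    have hget : Function.Injective l.get := List.nodup_iff_injective_get.mp hnd
    refine ⟨⟨fun i => l.get ⟨i.1, by omega⟩, fun a b hab => ?_⟩, ?_, ?_⟩
    · have := hget hab
      rw [Fin.mk.injEq] at this
      exact Fin.ext this
    · -- Q holds
      intro e he
      rw [chainPairs, Finset.mem_image] at he
      obtain ⟨i, -, hi⟩ := he
      change s(l.get ⟨i.1, by omega⟩, l.get ⟨i.1 + 1, by omega⟩) = e at hi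
      have hadj : (erGraph ω).Adj (l.get ⟨i.1, by omega⟩) (l.get ⟨i.1 + 1, by omega⟩) := by
        have := List.isChain_iff_getElem.mp hchain i.1 (by have := i.2; omega)
        exact this
      rw [← hi, ← adj_erGraph hadj.ne]
      exact hadj
    · -- ofFn of it equals l
      apply List.ext_get (by simp [hlen])
      intro m h1 h2
      rw [List.get_ofFn]
      simp
  · -- target finite
    exact Set.toFinite _

end ErProof

namespace ErProof
open MeasureTheory List Finset
open scoped ENNReal

variable {n k : ℕ}

lemma erMeasure_prob (n : ℕ) (q : ℝ≥0∞) (hq : q ≤ 1) :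
    IsProbabilityMeasure (erMeasure n q hq) := by
  unfold erMeasure; infer_instance

lemma meas_event (q : ℝ≥0∞) (hq : q ≤ 1) (s : Finset (Sym2 (Fin n))) :
    erMeasure n q hq {ω | ∀ e ∈ s, ω e = true} = q ^ s.card := by
  classical
  have hset : {ω : Sym2 (Fin n) → Bool | ∀ e ∈ s, ω e = true} =
      Set.pi Set.univ (fun e => if e ∈ s then {true} else Set.univ) := by
    ext ω
    simp only [Set.mem_setOf_eq, Set.mem_pi, Set.mem_univ, true_implies]
    refine forall_congr' fun e => ?_
    split_ifs with h <;> simp [h]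
  rw [erMeasure, hset, Measure.pi_pi]
  have hval : ∀ e : Sym2 (Fin n),
      (PMF.ofFintype (fun b => cond b q (1 - q)) (by simp [hq])).toMeasure (if e ∈ s then ({true} : Set Bool) else Set.univ) =
        if e ∈ s then q else 1 := by
    intro e
    split_ifs with h
    · rw [PMF.toMeasure_apply_singleton _ _ (measurableSet_singleton _)]
      rfl
    · have : IsProbabilityMeasure (PMF.ofFintype (fun b => cond b q (1 - q)) (by simp [hq])).toMeasure := inferInstance
      exact measure_univ
  simp_rw [hval]
  rw [Finset.prod_ite_mem, Finset.univ_inter, Finset.prod_const]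

lemma integral_card_filter (q : ℝ≥0∞) (hq : q ≤ 1) (m : ℕ)
    (E : (Fin (k+1) ↪ Fin n) → Finset (Sym2 (Fin n))) (hE : ∀ f, (E f).card = m) :
    ∫ ω, ((Finset.univ.filter fun f : Fin (k+1) ↪ Fin n =>
        ∀ e ∈ E f, ω e = true).card : ℝ) ∂ erMeasure n q hq
      = (Fintype.card (Fin (k+1) ↪ Fin n) : ℝ) * q.toReal ^ m := by
  classical
  haveI := erMeasure_prob n q hq
  have hrw : ∀ ω : Sym2 (Fin n) → Bool,
      ((Finset.univ.filter fun f : Fin (k+1) ↪ Fin n => ∀ e ∈ E f, ω e = true).card : ℝ)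
      = ∑ f : Fin (k+1) ↪ Fin n, if (∀ e ∈ E f, ω e = true) then (1:ℝ) else 0 := by
    intro ω; rw [Finset.card_filter]; push_cast; rfl
  simp_rw [hrw]
  rw [integral_finset_sum _ (fun f _ => Integrable.of_finite)]
  have hone : ∀ f : Fin (k+1) ↪ Fin n,
      ∫ ω, (if (∀ e ∈ E f, ω e = true) then (1:ℝ) else 0) ∂ erMeasure n q hq
        = q.toReal ^ m := by
    intro f
    have hind : (fun ω : Sym2 (Fin n) → Bool => if (∀ e ∈ E f, ω e = true) then (1:ℝ) else 0)
        = Set.indicator {ω | ∀ e ∈ E f, ω e = true} ((1 : (Sym2 (Fin n) → Bool) → ℝ)) := by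
      ext ω; rw [Set.indicator_apply]; rfl
    rw [hind, integral_indicator_one ((Set.toFinite _).measurableSet),
      measureReal_def, meas_event q hq (E f), hE f, ENNReal.toReal_pow]
  simp_rw [hone]
  rw [Finset.sum_const, nsmul_eq_mul, Finset.card_univ]

end ErProof

namespace ErProof
open Filter Finset
open scoped Topology

lemma tendsto_descFactorial (k : ℕ) :
    Tendsto (fun n : ℕ => (n.descFactorial (k+1) : ℝ) / (n : ℝ) ^ (k+1)) atTop (𝓝 1) := by
  have hB : Tendsto (fun n : ℕ => ∏ i ∈ range (k+1), (1 - (i:ℝ)/n)) atTop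
      (𝓝 (∏ _i ∈ range (k+1), (1:ℝ))) := by
    refine tendsto_finset_prod _ fun i _ => ?_
    have := tendsto_const_div_atTop_nhds_zero_nat (i : ℝ)
    simpa using tendsto_const_nhds.sub this
  rw [Finset.prod_const_one] at hB
  refine Tendsto.congr' ?_ hB
  filter_upwards [eventually_ge_atTop (k+1)] with n hn
  have hn0 : (n:ℝ) ≠ 0 := Nat.cast_ne_zero.mpr (by omega)
  rw [Nat.descFactorial_eq_prod_range, Nat.cast_prod,
    show ((n:ℝ))^(k+1) = ∏ _i ∈ range (k+1), (n:ℝ) by rw [Finset.prod_const, Finset.card_range],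
    ← Finset.prod_div_distrib]
  refine Finset.prod_congr rfl fun i hi => ?_
  rw [Finset.mem_range] at hi
  rw [Nat.cast_sub (by omega), sub_div, div_self hn0]

end ErProof

open Filter MeasureTheory ErProof


/-- Theorem 4.6: fix `k ≥ 1` and a sequence `(p_n)` in `(0,1]` with
`1 - p_n = O(ln n / n)`.  Then `E[β_{k,k}(G(n,p_n))] / (n^{k+1} p_n^{2k-1}) → 1`. -/
theorem er_expected_betti_asymptotics (k : ℕ) (hk : 1 ≤ k) (p : ℕ → ℝ)
    (hp0 : ∀ n, 0 < p n) (hp1 : ∀ n, p n ≤ 1)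
    (hO : ∃ C : ℝ, ∀ᶠ n : ℕ in Filter.atTop, 1 - p n ≤ C * (Real.log n / n)) :
    Filter.Tendsto
      (fun n : ℕ =>
        (∫ ω, (emBetti (erGraph ω) k : ℝ)
            ∂ erMeasure n (ENNReal.ofReal (p n)) (ENNReal.ofReal_le_one.mpr (hp1 n))) /
          ((n : ℝ) ^ (k + 1) * p n ^ (2 * k - 1)))
      Filter.atTop (nhds 1) := by
  have hqto : ∀ n, (ENNReal.ofReal (p n)).toReal = p n :=
    fun n => ENNReal.toReal_ofReal (hp0 n).le
  have hpne : ∀ n, p n ≠ 0 := fun n => (hp0 n).ne'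
  -- p → 1
  have hlog : Tendsto (fun n : ℕ => Real.log n / n) atTop (nhds 0) :=
    (Real.isLittleO_log_id_atTop.tendsto_div_nhds_zero).comp tendsto_natCast_atTop_atTop
  obtain ⟨C, hC⟩ := hO
  have hsub : Tendsto (fun n : ℕ => 1 - p n) atTop (nhds 0) := by
    refine tendsto_of_tendsto_of_tendsto_of_le_of_le' tendsto_const_nhds ?_ ?_ hC
    · simpa using hlog.const_mul C
    · exact Eventually.of_forall fun n => by linarith [hp1 n]
  have hp_lim : Tendsto p atTop (nhds 1) := by
    have h2 := tendsto_const_nhds (x := (1:ℝ)) (f := (atTop : Filter ℕ)) |>.sub hsub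
    simpa using h2
  -- expectations
  have hcard : ∀ n : ℕ, (Fintype.card (Fin (k+1) ↪ Fin n) : ℝ) = (n.descFactorial (k+1) : ℝ) := by
    intro n; rw [Fintype.card_embedding_eq, Fintype.card_fin, Fintype.card_fin]
  have hlow : ∀ n : ℕ, (n.descFactorial (k+1) : ℝ) * p n ^ (2*k-1)
      ≤ ∫ ω, (emBetti (erGraph ω) k : ℝ)
          ∂ erMeasure n (ENNReal.ofReal (p n)) (ENNReal.ofReal_le_one.mpr (hp1 n)) := by
    intro n
    haveI := ErProof.erMeasure_prob n (ENNReal.ofReal (p n)) (ENNReal.ofReal_le_one.mpr (hp1 n))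
    have h := ErProof.integral_card_filter (n := n) (k := k) (ENNReal.ofReal (p n))
      (ENNReal.ofReal_le_one.mpr (hp1 n)) (2*k-1) (ErProof.goodPairs n k)
      (ErProof.card_goodPairs hk)
    rw [hcard n, hqto n] at h
    rw [← h]
    refine integral_mono .of_finite .of_finite fun ω => ?_
    exact Nat.cast_le.mpr (ErProof.card_good_le_emBetti hk ω)
  have hup : ∀ n : ℕ, (∫ ω, (emBetti (erGraph ω) k : ℝ)
          ∂ erMeasure n (ENNReal.ofReal (p n)) (ENNReal.ofReal_le_one.mpr (hp1 n)))
      ≤ (n.descFactorial (k+1) : ℝ) * p n ^ k := by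
    intro n
    haveI := ErProof.erMeasure_prob n (ENNReal.ofReal (p n)) (ENNReal.ofReal_le_one.mpr (hp1 n))
    have h := ErProof.integral_card_filter (n := n) (k := k) (ENNReal.ofReal (p n))
      (ENNReal.ofReal_le_one.mpr (hp1 n)) k (ErProof.chainPairs n k)
      (fun f => ErProof.card_chainPairs f)
    rw [hcard n, hqto n] at h
    rw [← h]
    refine integral_mono .of_finite .of_finite fun ω => ?_
    exact Nat.cast_le.mpr (ErProof.emBetti_le_card_chain (k := k) ω)
  -- limits
  have hAlim := ErProof.tendsto_descFactorial k
  have hUlim : Tendsto (fun n : ℕ =>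
      ((n.descFactorial (k+1) : ℝ) / (n : ℝ) ^ (k+1)) / p n ^ (k-1)) atTop (nhds 1) := by
    have h3 := hAlim.div (hp_lim.pow (k-1)) (by simp)
    simpa [Pi.div_def] using h3
  refine tendsto_of_tendsto_of_tendsto_of_le_of_le' hAlim hUlim ?_ ?_
  · filter_upwards [eventually_ge_atTop 1] with n hn
    have hnpos : (0:ℝ) < (n:ℝ)^(k+1) := pow_pos (by exact_mod_cast Nat.pos_of_ne_zero (by omega)) _
    calc (n.descFactorial (k+1) : ℝ) / (n : ℝ) ^ (k+1)
        = ((n.descFactorial (k+1) : ℝ) * p n ^ (2*k-1)) / ((n:ℝ)^(k+1) * p n ^ (2*k-1)) := by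
          rw [mul_div_mul_right _ _ (pow_ne_zero _ (hpne n))]
      _ ≤ _ := div_le_div_of_nonneg_right (hlow n)
          (mul_pos hnpos (pow_pos (hp0 n) _)).le
  · filter_upwards [eventually_ge_atTop 1] with n hn
    have hnne : ((n:ℝ))^(k+1) ≠ 0 := pow_ne_zero _ (Nat.cast_ne_zero.mpr (by omega))
    have hrw : ((n.descFactorial (k+1) : ℝ) / (n : ℝ) ^ (k+1)) / p n ^ (k-1)
        = ((n.descFactorial (k+1) : ℝ) * p n ^ k) / ((n:ℝ)^(k+1) * p n ^ (2*k-1)) := by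
      have hexp : 2*k-1 = k + (k-1) := by omega
      rw [hexp, pow_add (p n) k (k-1),
        show (n:ℝ)^(k+1) * (p n ^ k * p n ^ (k-1)) = (n:ℝ)^(k+1) * p n ^ (k-1) * p n ^ k by ring,
        mul_div_mul_right _ _ (pow_ne_zero _ (hpne n)), div_div]
    rw [hrw]
    have hnpos : (0:ℝ) < (n:ℝ)^(k+1) := pow_pos (by exact_mod_cast Nat.pos_of_ne_zero (by omega)) _
    exact div_le_div_of_nonneg_right (hup n) (mul_pos hnpos (pow_pos (hp0 n) _)).le
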